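/- Let x_1, …, x_n ∈ ℝ^{2n} be linearly independent vectors spanning a Lagrangian subspace, i.e. x_iᵀ J x_j = 0 for all i, j, set X := [x_1 ⋯ x_n] ∈ ℝ^{2n×n}, and let C ∈ ℝ^{n×n} be any companion matrix (C e_k = e_{k+1} for k = 1, …, n-1, last column arbitrary). Then the matrix H̃ := X C X⁺ + Jᵀ (X C X⁺)ᵀ J is skew-Hamiltonian, satisfies H̃ X = X C, and in particular H̃ x_k = x_{k+1} for all k = 1, …, n-1. -/

import Mathlib

open Matrix

noncomputable section

/-- The canonical skew-symmetric matrix `J = [[0, I],[-I, 0]]`. -/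
def Jmat (n : ℕ) : Matrix (Fin n ⊕ Fin n) (Fin n ⊕ Fin n) ℝ :=
  Matrix.fromBlocks 0 1 (-1) 0

/-- A matrix `H` is skew-Hamiltonian if `Jᵀ Hᵀ J = H`. -/
def IsSkewHamiltonian {n : ℕ} (H : Matrix (Fin n ⊕ Fin n) (Fin n ⊕ Fin n) ℝ) : Prop :=
  (Jmat n)ᵀ * Hᵀ * Jmat n = H

/-- `X = [x_1 ⋯ x_n] ∈ ℝ^{2n×n}`. -/
def Xfull {n : ℕ} (x : Fin n → (Fin n ⊕ Fin n) → ℝ) :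
    Matrix (Fin n ⊕ Fin n) (Fin n) ℝ :=
  Matrix.of fun i j => x j i

/-- The Moore–Penrose pseudoinverse `X⁺ = (Xᵀ X)⁻¹ Xᵀ` of `X`
(for `X` with linearly independent columns). -/
def Xpinv {n : ℕ} (x : Fin n → (Fin n ⊕ Fin n) → ℝ) :
    Matrix (Fin n) (Fin n ⊕ Fin n) ℝ :=
  ((Xfull x)ᵀ * Xfull x)⁻¹ * (Xfull x)ᵀ

/-- A companion matrix: ones on the subdiagonal, last column arbitrary, zeros elsewhere;
equivalently `C e_k = e_{k+1}` for `k = 1, …, n-1`. -/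
def IsCompanion {n : ℕ} (C : Matrix (Fin n) (Fin n) ℝ) : Prop :=
  ∀ k : Fin n, k.1 + 1 < n → ∀ i : Fin n, C i k = if i.1 = k.1 + 1 then 1 else 0

/-- `H̃ = X C X⁺ + Jᵀ (X C X⁺)ᵀ J`. -/
def Htilde {n : ℕ} (x : Fin n → (Fin n ⊕ Fin n) → ℝ) (C : Matrix (Fin n) (Fin n) ℝ) :
    Matrix (Fin n ⊕ Fin n) (Fin n ⊕ Fin n) ℝ :=
  Xfull x * C * Xpinv x + (Jmat n)ᵀ * (Xfull x * C * Xpinv x)ᵀ * Jmat n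


section Aux

variable {n : ℕ} (x : Fin n → (Fin n ⊕ Fin n) → ℝ)

lemma Jmat_transpose (n : ℕ) : (Jmat n)ᵀ = -Jmat n := by
  ext i j
  cases i <;> cases j <;>
    simp [Jmat, Matrix.fromBlocks, Matrix.one_apply, eq_comm]

lemma Jmat_mul_Jmat (n : ℕ) : Jmat n * Jmat n = -1 := by
  ext i j
  cases i <;> cases j <;>
    simp [Jmat, Matrix.mul_apply, Matrix.fromBlocks, Matrix.one_apply,
      Fintype.sum_sum_type, eq_comm]

lemma isSkewHamiltonian_add {n : ℕ} (A : Matrix (Fin n ⊕ Fin n) (Fin n ⊕ Fin n) ℝ) :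
    IsSkewHamiltonian (A + (Jmat n)ᵀ * Aᵀ * Jmat n) := by
  have hJJ := Jmat_mul_Jmat n
  have hJT := Jmat_transpose n
  unfold IsSkewHamiltonian
  have hH : (A + (Jmat n)ᵀ * Aᵀ * Jmat n)ᵀ = Aᵀ + (Jmat n)ᵀ * A * Jmat n := by
    rw [Matrix.transpose_add, Matrix.transpose_mul, Matrix.transpose_mul,
      Matrix.transpose_transpose, Matrix.transpose_transpose, Matrix.mul_assoc]
  rw [hH, Matrix.mul_add, Matrix.add_mul]
  have key : (Jmat n)ᵀ * ((Jmat n)ᵀ * A * Jmat n) * Jmat n = A := by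
    rw [hJT]
    simp only [Matrix.neg_mul, Matrix.mul_neg, neg_neg, Matrix.mul_assoc]
    rw [hJJ]
    simp only [Matrix.mul_neg, Matrix.mul_one, Matrix.neg_mul, neg_neg]
    rw [← Matrix.mul_assoc, hJJ]
    simp
  rw [key, add_comm]

lemma Xfull_transpose_apply (i : Fin n) : (Xfull x)ᵀ i = x i := rfl

lemma gram_isUnit (hLI : LinearIndependent ℝ x) :
    IsUnit ((Xfull x)ᵀ * Xfull x) := by
  have hXinj : Function.Injective (Xfull x).mulVec :=
    Matrix.mulVec_injective_iff.mpr (by exact hLI)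
  rw [← Matrix.mulVec_injective_iff_isUnit]
  intro v w hvw
  apply hXinj
  have h0 : (Xfull x)ᵀ *ᵥ (Xfull x *ᵥ (v - w)) = 0 := by
    rw [Matrix.mulVec_mulVec, Matrix.mulVec_sub, hvw, sub_self]
  have h1 : (Xfull x *ᵥ (v - w)) ⬝ᵥ (Xfull x *ᵥ (v - w)) = 0 := by
    have := congrArg (fun z => (v - w) ⬝ᵥ z) h0
    simp only [Matrix.dotProduct_mulVec, Matrix.vecMul_transpose,
      dotProduct_zero] at this
    rw [Matrix.dotProduct_mulVec]
    exact this
  have h2 : Xfull x *ᵥ (v - w) = 0 := dotProduct_self_eq_zero.mp h1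
  rw [Matrix.mulVec_sub] at h2
  exact sub_eq_zero.mp h2

lemma pinv_mul (hLI : LinearIndependent ℝ x) : Xpinv x * Xfull x = 1 := by
  rw [Xpinv, Matrix.mul_assoc]
  exact Matrix.nonsing_inv_mul _ ((Matrix.isUnit_iff_isUnit_det _).mp (gram_isUnit x hLI))

lemma XtJX (hLag : ∀ i j : Fin n, x i ⬝ᵥ (Jmat n *ᵥ x j) = 0) :
    (Xfull x)ᵀ * Jmat n * Xfull x = 0 := by
  ext i j
  rw [Matrix.mul_assoc, Matrix.mul_apply]
  have hcol : ∀ a, (Jmat n * Xfull x) a j = (Jmat n *ᵥ x j) a := fun a => by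
    simp [Matrix.mul_apply, Matrix.mulVec, dotProduct, Xfull]
  simp only [hcol]
  simpa [dotProduct, Matrix.transpose_apply, Xfull] using hLag i j

end Aux

/-- For a basis of a Lagrangian subspace and a companion matrix `C`, the matrix
`H̃ = X C X⁺ + Jᵀ (X C X⁺)ᵀ J` is skew-Hamiltonian, satisfies `H̃ X = X C`, and in
particular `H̃ x_k = x_{k+1}` for `k = 1, …, n-1`. -/
theorem Htilde_skewHamiltonian {n : ℕ} (x : Fin n → (Fin n ⊕ Fin n) → ℝ)
    (hLI : LinearIndependent ℝ x)
    (hLag : ∀ i j : Fin n, x i ⬝ᵥ (Jmat n *ᵥ x j) = 0)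
    (C : Matrix (Fin n) (Fin n) ℝ) (hC : IsCompanion C) :
    IsSkewHamiltonian (Htilde x C) ∧
    Htilde x C * Xfull x = Xfull x * C ∧
    ∀ (k : Fin n) (h : k.1 + 1 < n), Htilde x C *ᵥ x k = x ⟨k.1 + 1, h⟩ := by
  classical
  have hpinv := pinv_mul x hLI
  have hJX : (Xfull x * C * Xpinv x)ᵀ * (Jmat n * Xfull x) = 0 := by
    rw [Matrix.transpose_mul, Matrix.transpose_mul, Matrix.mul_assoc, Matrix.mul_assoc Cᵀ,
      ← Matrix.mul_assoc ((Xfull x)ᵀ), XtJX x hLag]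
    simp
  have hHX : Htilde x C * Xfull x = Xfull x * C := by
    rw [Htilde, Matrix.add_mul]
    have h1 : Xfull x * C * Xpinv x * Xfull x = Xfull x * C := by
      rw [Matrix.mul_assoc, hpinv, Matrix.mul_one]
    have h2 : (Jmat n)ᵀ * (Xfull x * C * Xpinv x)ᵀ * Jmat n * Xfull x = 0 := by
      rw [Matrix.mul_assoc, Matrix.mul_assoc, hJX]
      simp
    rw [h1, h2, add_zero]
  refine ⟨?_, hHX, ?_⟩
  · rw [show Htilde x C = Xfull x * C * Xpinv x
        + (Jmat n)ᵀ * (Xfull x * C * Xpinv x)ᵀ * Jmat n from rfl]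
    exact isSkewHamiltonian_add _
  · intro k h
    funext i
    have h1 : (Htilde x C *ᵥ x k) i = (Htilde x C * Xfull x) i k := by
      simp [Matrix.mul_apply, Matrix.mulVec, dotProduct, Xfull]
    rw [h1, hHX]
    have h2 : (Xfull x * C) i k = ∑ j, x j i * C j k := by
      simp [Matrix.mul_apply, Xfull]
    rw [h2]
    rw [Finset.sum_eq_single (⟨k.1 + 1, h⟩ : Fin n)]
    · rw [hC k h]; simp
    · intro b _ hb
      rw [hC k h]
      have : ¬ b.1 = k.1 + 1 := fun hh => hb (Fin.ext hh)
      simp [this]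
    · simp
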